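/- Payment invariance under winner underbidding (DSIC case (i) of the PAC mechanism): in the fixed-k PAC mechanism with truthful sorted profile v satisfying v_k/(n−k) ≤ B/k, if a winner i (1 ≤ i ≤ k) unilaterally deviates to any report r′ with 0 ≤ r′ ≤ v_i, then in the deviation profile (r′, v_{−i}) client i remains a winner, the (k+1)-th smallest report is still v_{k+1}, and hence its payment min(B/k, v_{k+1}/(n−k)) and its utility are unchanged from the truthful outcome. -/

import Mathlib

open Classical

/-- Key counting characterization of entries of a sorted list. -/
lemma sorted_getD_le_iff (l : List ℝ) (hs : l.Pairwise (· ≤ ·)) (j : ℕ) (hj : j < l.length) (y : ℝ) :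
    l.getD j 0 ≤ y ↔ j + 1 ≤ l.countP (fun a => decide (a ≤ y)) := by
  rw [List.getD_eq_getElem l 0 hj]
  constructor
  · intro h
    have hlen : (l.take (j+1)).length = j + 1 := by
      rw [List.length_take]; omega
    have hall : ∀ a ∈ l.take (j+1), (fun a => decide (a ≤ y)) a = true := by
      intro a ha
      obtain ⟨m, hm, rfl⟩ := List.mem_iff_getElem.1 ha
      rw [List.getElem_take]
      simp only [decide_eq_true_eq]
      have hmj : m ≤ j := by rw [hlen] at hm; omega
      have : l[m]'(by omega) ≤ l[j] := by
        rcases eq_or_lt_of_le hmj with h'|h'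
        · subst h'; exact le_refl _
        · exact List.pairwise_iff_get.1 hs ⟨m, by omega⟩ ⟨j, hj⟩ h'
      exact this.trans h
    calc j + 1 = (l.take (j+1)).countP (fun a => decide (a ≤ y)) := by
              rw [List.countP_eq_length.2 hall, hlen]
      _ ≤ l.countP (fun a => decide (a ≤ y)) := by
              conv_rhs => rw [← List.take_append_drop (j+1) l]
              rw [List.countP_append]; omega
  · intro h
    by_contra hlt
    push_neg at hlt
    have hdrop : (l.drop j).countP (fun a => decide (a ≤ y)) = 0 := by
      rw [List.countP_eq_zero]
      intro a ha
      obtain ⟨m, hm, rfl⟩ := List.mem_iff_getElem.1 ha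
      rw [List.getElem_drop]
      simp only [decide_eq_true_eq, not_le]
      have : l[j] ≤ l[j+m]'(by rw [List.length_drop] at hm; omega) := by
        rcases Nat.eq_or_lt_of_le (Nat.le_add_right j m) with h'|h'
        · simp [← h']
        · exact List.pairwise_iff_get.1 hs ⟨j, hj⟩ ⟨j+m, by rw [List.length_drop] at hm; omega⟩ h'
      exact lt_of_lt_of_le hlt this
    have : l.countP (fun a => decide (a ≤ y)) ≤ j := by
      conv_lhs => rw [← List.take_append_drop j l]
      rw [List.countP_append, hdrop]
      have := (List.countP_le_length : (l.take j).countP (fun a => decide (a ≤ y)) ≤ (l.take j).length)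
      rw [List.length_take] at this
      omega
    omega

/-- The `j`-th smallest report (0-indexed) of a report profile `r : Fin n → ℝ`:
the entry at index `j` of the list sorting the multiset of reports nondecreasingly. -/
noncomputable def orderStat (n : ℕ) (r : Fin n → ℝ) (j : ℕ) : ℝ :=
  ((Finset.univ.val.map r).sort (· ≤ ·)).getD j 0

/-- Client `i` is a winner of the fixed-`k` PAC mechanism on report profile `r` iff
the number of indices `j` with `r j < r i`, or with `r j = r i` and `j ≤ i`, is at
most `k` (i.e. `i` is among the `k` smallest reports, ties broken by lower index). -/
noncomputable def isWinner (n k : ℕ) (r : Fin n → ℝ) (i : Fin n) : Prop :=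
  (Finset.univ.filter (fun j : Fin n => r j < r i ∨ (r j = r i ∧ j ≤ i))).card ≤ k

/-- Utility of client `i` with true valuation `vi` under report profile `r` in the
fixed-`k` PAC mechanism with budget `B`: a winner is paid
`min (B/k) (r_(k+1) / (n-k))` and incurs privacy cost `vi / (n-k)`; a loser gets `0`. -/
noncomputable def utilPAC (n k : ℕ) (B : ℝ) (vi : ℝ) (r : Fin n → ℝ) (i : Fin n) : ℝ :=
  if isWinner n k r i then
    min (B / k) (orderStat n r k / ((n : ℝ) - k)) - vi / ((n : ℝ) - k)
  else 0

/-- Sorting a monotone profile gives back the profile. -/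
lemma sort_of_monotone (n : ℕ) (v : Fin n → ℝ) (hmono : Monotone v) :
    (Finset.univ.val.map v).sort (· ≤ ·) = List.ofFn v := by
  rw [Fin.univ_val_map]
  refine (fun hp h1 h2 => List.Perm.eq_of_pairwise' (r := (· ≤ · : ℝ → ℝ → Prop)) h1 h2 hp) ?_ ?_ ?_
  · rw [← Multiset.coe_eq_coe, Multiset.sort_eq]
  · exact Multiset.pairwise_sort _ _
  · exact (List.sortedLE_ofFn_iff.2 hmono).pairwise

lemma orderStat_of_monotone (n : ℕ) (v : Fin n → ℝ) (hmono : Monotone v)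
    (j : ℕ) (hj : j < n) : orderStat n v j = v ⟨j, hj⟩ := by
  rw [orderStat, sort_of_monotone n v hmono,
    List.getD_eq_getElem _ 0 (by simpa using hj), List.getElem_ofFn]

lemma update_multisets (n : ℕ) (v : Fin n → ℝ) (i : Fin n) (r' : ℝ) :
    Finset.univ.val.map (Function.update v i r') =
      r' ::ₘ (Finset.univ.erase i).val.map v ∧
    Finset.univ.val.map v = v i ::ₘ (Finset.univ.erase i).val.map v := by
  have hmem : i ∈ Finset.univ.val := Finset.mem_univ_val i
  have hcons : Finset.univ.val = i ::ₘ (Finset.univ.erase i).val := by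
    rw [Finset.erase_val]
    exact (Multiset.cons_erase hmem).symm
  have hcongr : ∀ j ∈ (Finset.univ.erase i).val, Function.update v i r' j = v j := by
    intro j hj
    have : j ≠ i := (Finset.mem_erase.1 (Finset.mem_def.2 hj)).1
    simp [Function.update_of_ne this]
  constructor
  · rw [hcons, Multiset.map_cons, Function.update_self, Multiset.map_congr rfl hcongr]
  · rw [hcons, Multiset.map_cons]

/-- Payment invariance under winner underbidding (DSIC case (i) of the PAC
mechanism): with truthful sorted profile `v` satisfying the feasibility condition,
if a winner `i` (0-based index `i < k`) deviates to any report `0 ≤ r' ≤ v i`,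
then `i` remains a winner, the `(k+1)`-th smallest report is still `v (k+1)`
(0-based index `k`), and hence its payment and its utility are unchanged. -/
theorem pac_winner_underbid_invariance
    (n k : ℕ) (hk : 1 ≤ k) (hkn : k < n)
    (B : ℝ) (hB : 0 < B)
    (v : Fin n → ℝ) (hmono : Monotone v) (hnn : ∀ i, 0 ≤ v i)
    (hfeas : v ⟨k - 1, by omega⟩ / ((n : ℝ) - k) ≤ B / k)
    (i : Fin n) (hi : (i : ℕ) < k)
    (r' : ℝ) (hr0 : 0 ≤ r') (hr : r' ≤ v i) :
    isWinner n k (Function.update v i r') i ∧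
    orderStat n (Function.update v i r') k = v ⟨k, hkn⟩ ∧
    min (B / k) (orderStat n (Function.update v i r') k / ((n : ℝ) - k)) =
      min (B / k) (orderStat n v k / ((n : ℝ) - k)) ∧
    utilPAC n k B (v i) (Function.update v i r') i = utilPAC n k B (v i) v i := by
  set w : Fin n → ℝ := Function.update v i r' with hw
  have hik : i ≤ (⟨k, hkn⟩ : Fin n) := by
    apply Fin.le_def.2; simp; omega
  have hvik : v i ≤ v ⟨k, hkn⟩ := hmono hik
  -- winner in deviation profile
  have hwinW : isWinner n k w i := by
    unfold isWinner
    have hsub : (Finset.univ.filter (fun j : Fin n => w j < w i ∨ (w j = w i ∧ j ≤ i)))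
        ⊆ Finset.Iic i := by
      intro j hj
      rw [Finset.mem_filter] at hj
      rw [Finset.mem_Iic]
      rcases hj.2 with h | h
      · by_contra hji
        push_neg at hji
        have hjne : j ≠ i := ne_of_gt hji
        have : w j = v j := Function.update_of_ne hjne r' v
        rw [this] at h
        have : v i ≤ v j := hmono (le_of_lt hji)
        have hwi : w i = r' := Function.update_self i r' v
        rw [hwi] at h
        linarith
      · exact h.2
    calc _ ≤ (Finset.Iic i).card := Finset.card_le_card hsub
      _ = i + 1 := Fin.card_Iic i
      _ ≤ k := by omega
  -- winner in truthful profile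
  have hwinV : isWinner n k v i := by
    unfold isWinner
    have hsub : (Finset.univ.filter (fun j : Fin n => v j < v i ∨ (v j = v i ∧ j ≤ i)))
        ⊆ Finset.Iic i := by
      intro j hj
      rw [Finset.mem_filter] at hj
      rw [Finset.mem_Iic]
      rcases hj.2 with h | h
      · by_contra hji
        push_neg at hji
        have : v i ≤ v j := hmono (le_of_lt hji)
        linarith
      · exact h.2
    calc _ ≤ (Finset.Iic i).card := Finset.card_le_card hsub
      _ = i + 1 := Fin.card_Iic i
      _ ≤ k := by omega
  -- multiset decompositions
  obtain ⟨hW, hV⟩ := update_multisets n v i r'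
  set T : Multiset ℝ := (Finset.univ.erase i).val.map v with hT
  -- the sorted list of the deviation profile
  set lw : List ℝ := (Finset.univ.val.map w).sort (· ≤ ·) with hlw
  have hlws : lw.Pairwise (· ≤ ·) := Multiset.pairwise_sort _ _
  have hlwlen : lw.length = n := by
    rw [hlw, Multiset.length_sort, Multiset.card_map]
    simp
  have hklen : k < lw.length := by omega
  -- countP of sorted lists equals multiset countP
  have hcount : ∀ y : ℝ, lw.countP (fun a => decide (a ≤ y))
      = Multiset.countP (fun a => a ≤ y) (Finset.univ.val.map w) := by
    intro y
    rw [← Multiset.sort_eq (Finset.univ.val.map w) (· ≤ ·), Multiset.coe_countP]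
  have hcountv : ∀ y : ℝ, (List.ofFn v).countP (fun a => decide (a ≤ y))
      = Multiset.countP (fun a => a ≤ y) (Finset.univ.val.map v) := by
    intro y
    rw [Fin.univ_val_map, Multiset.coe_countP]
  have hvlen : k < (List.ofFn v).length := by simpa using hkn
  have hvsorted : (List.ofFn v).Pairwise (· ≤ ·) := (List.sortedLE_ofFn_iff.2 hmono).pairwise
  have hvgetD : (List.ofFn v).getD k 0 = v ⟨k, hkn⟩ := by
    rw [List.getD_eq_getElem _ 0 hvlen, List.getElem_ofFn]
  -- main order statistic equality
  have hOS : orderStat n w k = v ⟨k, hkn⟩ := by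
    have hle : orderStat n w k ≤ v ⟨k, hkn⟩ := by
      have h1 : k + 1 ≤ (List.ofFn v).countP (fun a => decide (a ≤ v ⟨k, hkn⟩)) := by
        rw [← sorted_getD_le_iff _ hvsorted k hvlen, hvgetD]
      rw [hcountv, hV, Multiset.countP_cons_of_pos (p := fun a => a ≤ v ⟨k, hkn⟩) _ hvik] at h1
      apply (sorted_getD_le_iff lw hlws k hklen _).2
      rw [hcount, hW, Multiset.countP_cons_of_pos (p := fun a => a ≤ v ⟨k, hkn⟩) _ (le_trans hr hvik)]
      omega
    have hge : v ⟨k, hkn⟩ ≤ orderStat n w k := by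
      set z := orderStat n w k with hz
      have h2 : k + 1 ≤ lw.countP (fun a => decide (a ≤ z)) :=
        (sorted_getD_le_iff lw hlws k hklen z).1 (le_refl _)
      rw [hcount, hW, Multiset.countP_cons] at h2
      by_cases hiz : v i ≤ z
      · -- then the truthful profile has ≥ k+1 reports ≤ z
        have h3 : k + 1 ≤ (List.ofFn v).countP (fun a => decide (a ≤ z)) := by
          rw [hcountv, hV, Multiset.countP_cons_of_pos (p := fun a => a ≤ z) _ hiz]
          split at h2 <;> omega
        have := (sorted_getD_le_iff _ hvsorted k hvlen z).2 h3
        rwa [hvgetD] at this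
      · push_neg at hiz
        -- all reports in T that are ≤ z come from indices < i
        exfalso
        have hTcount : Multiset.countP (fun a => a ≤ z) T ≤ (i : ℕ) := by
          rw [hT, Multiset.countP_map]
          have : Multiset.filter (fun a => v a ≤ z) (Finset.univ.erase i).val
              = ((Finset.univ.erase i).filter (fun a => v a ≤ z)).val := by
            rw [Finset.filter_val]
          rw [this]
          have hcard : ((Finset.univ.erase i).filter (fun a => v a ≤ z)).val.card
              = ((Finset.univ.erase i).filter (fun a => v a ≤ z)).card := rfl
          rw [hcard]
          have hsub : (Finset.univ.erase i).filter (fun a => v a ≤ z) ⊆ Finset.Iio i := by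
            intro j hj
            rw [Finset.mem_filter] at hj
            rw [Finset.mem_Iio]
            by_contra hji
            push_neg at hji
            have : v i ≤ v j := hmono hji
            linarith [hj.2]
          calc _ ≤ (Finset.Iio i).card := Finset.card_le_card hsub
            _ = (i : ℕ) := Fin.card_Iio i
        split at h2 <;> omega
    linarith
  have hOSv : orderStat n v k = v ⟨k, hkn⟩ := orderStat_of_monotone n v hmono k hkn
  refine ⟨hwinW, hOS, ?_, ?_⟩
  · rw [hOS, hOSv]
  · rw [utilPAC, utilPAC, if_pos hwinW, if_pos hwinV, hOS, hOSv]
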